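/- Let R = ℤ[t^{±1}] be the ring of Laurent polynomials over ℤ and t ∈ R its distinguished variable. Let A ∈ M_2(R) be the matrix with rows (0, t) and (1, 0). If B ∈ M_2(R) is invertible and A·B = B·A, then there exist a, c ∈ R such that B is the matrix with rows (a, c·t) and (c, a). -/
import Mathlib


open Matrix LaurentPolynomial

/-- The form of all extensions of the standard representation of `B₂` to the
singular braid group `SB₂`: any invertible matrix `B` over `ℤ[t^{±1}]` commuting
with the standard matrix `!![0, t; 1, 0]` has the form `!![a, c*t; c, a]`. -/
theorem extension_standard_rep_SB2
    (B : Matrix (Fin 2) (Fin 2) (LaurentPolynomial ℤ))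
    (hB : IsUnit B)
    (hcomm : !![(0 : LaurentPolynomial ℤ), T 1; 1, 0] * B
        = B * !![(0 : LaurentPolynomial ℤ), T 1; 1, 0]) :
    ∃ a c : LaurentPolynomial ℤ, B = !![a, c * T 1; c, a] := by
  refine ⟨B 0 0, B 1 0, Matrix.ext fun i j => ?_⟩
  have h00 := congrFun (congrFun hcomm 0) 0
  have h10 := congrFun (congrFun hcomm 1) 0
  simp [Matrix.mul_apply, Fin.sum_univ_two] at h00 h10
  fin_cases i <;> fin_cases j
  · simp
  · simpa using h00.symm
  · simp
  · simpa using h10.symm
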